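/- Fix i and suppose that for every k ≠ i it holds that μ(X^i, X^k) < r_i − √(2 − 2 r_i) · cos θ*_{i,k}, where θ*_{i,k} is the principal angle between S_i and S_k. Then for every k ≠ i it holds that μ(W^i, X^k) < r_i. Consequently, the sufficient condition of Dyer et al. implies the coherence–inradius condition max_{k ≠ i} μ(W^i, X^k) < r_i. -/

import Mathlib

open scoped RealInnerProductSpace Classical

noncomputable section

namespace SSCOMP

variable {D : ℕ}

noncomputable def ompSelect {ι : Type*} [Fintype ι] [LinearOrder ι] [Nonempty ι]
    (a : ι → EuclideanSpace ℝ (Fin D)) (q : EuclideanSpace ℝ (Fin D)) : ι :=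
  (Finset.univ.filter fun i => ∀ m, |⟪a m, q⟫| ≤ |⟪a i, q⟫|).min' (by
    obtain ⟨i, -, hi⟩ := Finset.exists_max_image (Finset.univ : Finset ι)
      (fun m => |⟪a m, q⟫|) Finset.univ_nonempty
    exact ⟨i, Finset.mem_filter.mpr ⟨Finset.mem_univ i, fun m => hi m (Finset.mem_univ m)⟩⟩)

noncomputable def ompState {ι : Type*} [Fintype ι] [LinearOrder ι]
    (a : ι → EuclideanSpace ℝ (Fin D)) (b : EuclideanSpace ℝ (Fin D)) :
    ℕ → Finset ι × EuclideanSpace ℝ (Fin D)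
  | 0 => (∅, b)
  | k + 1 =>
    let s := ompState a b k
    if s.2 = 0 then s
    else if h : Nonempty ι then
      haveI := h
      let T' : Finset ι := insert (ompSelect a s.2) s.1
      (T', b - (Submodule.orthogonalProjection (Submodule.span ℝ (a '' (T' : Set ι))) b :
        EuclideanSpace ℝ (Fin D)))
    else s

noncomputable def ompSupport {ι : Type*} [Fintype ι] [LinearOrder ι]
    (a : ι → EuclideanSpace ℝ (Fin D)) (b : EuclideanSpace ℝ (Fin D)) (k : ℕ) : Finset ι :=
  (ompState a b k).1

noncomputable def ompResidual {ι : Type*} [Fintype ι] [LinearOrder ι]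
    (a : ι → EuclideanSpace ℝ (Fin D)) (b : EuclideanSpace ℝ (Fin D)) (k : ℕ) :
    EuclideanSpace ℝ (Fin D) :=
  (ompState a b k).2

def IsOMPOutput {ι : Type*} [Fintype ι] [LinearOrder ι]
    (a : ι → EuclideanSpace ℝ (Fin D)) (b : EuclideanSpace ℝ (Fin D)) (kmax : ℕ)
    (c : ι → ℝ) : Prop :=
  (∀ m, c m ≠ 0 → m ∈ ompSupport a b kmax) ∧
  ∀ c' : ι → ℝ, (∀ m, c' m ≠ 0 → m ∈ ompSupport a b kmax) →
    ‖b - ∑ m, c m • a m‖ ≤ ‖b - ∑ m, c' m • a m‖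

/-- Set of normalized nonzero residual directions of OMP(a, b) run with `ε = 0`
and `k_max` large enough. -/
noncomputable def residualDirs {ι : Type*} [Fintype ι] [LinearOrder ι]
    (a : ι → EuclideanSpace ℝ (Fin D)) (b : EuclideanSpace ℝ (Fin D)) :
    Set (EuclideanSpace ℝ (Fin D)) :=
  {w | ∃ k, ompResidual a b k ≠ 0 ∧ w = ‖ompResidual a b k‖⁻¹ • ompResidual a b k}

/-- Coherence between two sets of unit-norm points. -/
noncomputable def coherence (A B : Set (EuclideanSpace ℝ (Fin D))) : ℝ :=
  sSup {r : ℝ | ∃ u ∈ A, ∃ v ∈ B, r = |⟪u, v⟫|}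

/-- Symmetrized convex hull `conv(±A)`. -/
noncomputable def symmHull (A : Set (EuclideanSpace ℝ (Fin D))) :
    Set (EuclideanSpace ℝ (Fin D)) :=
  convexHull ℝ (A ∪ (-A))

/-- Inradius of a convex body: the radius of the largest Euclidean ball
(within the linear span of the body) inscribed in it. -/
noncomputable def inradius (P : Set (EuclideanSpace ℝ (Fin D))) : ℝ :=
  sSup {r : ℝ | 0 ≤ r ∧ ∃ c ∈ Submodule.span ℝ P,
    ∀ y ∈ Submodule.span ℝ P, ‖y - c‖ ≤ r → y ∈ P}

variable {n N : ℕ}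

/-- `X^i`: the set of data points lying in the `i`-th subspace. -/
noncomputable def subX (S : Fin n → Submodule ℝ (EuclideanSpace ℝ (Fin D)))
    (x : Fin N → EuclideanSpace ℝ (Fin D)) (i : Fin n) : Set (EuclideanSpace ℝ (Fin D)) :=
  x '' {m | x m ∈ S i}

/-- `X^i_{-j}`: the set of data points lying in the `i`-th subspace, with `x j` removed. -/
noncomputable def subXmin (S : Fin n → Submodule ℝ (EuclideanSpace ℝ (Fin D)))
    (x : Fin N → EuclideanSpace ℝ (Fin D)) (i : Fin n) (j : Fin N) :
    Set (EuclideanSpace ℝ (Fin D)) :=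
  x '' {m | x m ∈ S i ∧ m ≠ j}

/-- `W_j^i`: the set of OMP residual directions associated with `X^i_{-j}` and `x j`. -/
noncomputable def Wji (S : Fin n → Submodule ℝ (EuclideanSpace ℝ (Fin D)))
    (x : Fin N → EuclideanSpace ℝ (Fin D)) (i : Fin n) (j : Fin N) :
    Set (EuclideanSpace ℝ (Fin D)) :=
  residualDirs (fun m : {m : Fin N // x m ∈ S i ∧ m ≠ j} => x m.1) (x j)

/-- `W^i`: the set of OMP residual directions associated with `X^i`. -/
noncomputable def Wfull (S : Fin n → Submodule ℝ (EuclideanSpace ℝ (Fin D)))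
    (x : Fin N → EuclideanSpace ℝ (Fin D)) (i : Fin n) : Set (EuclideanSpace ℝ (Fin D)) :=
  ⋃ j ∈ {j : Fin N | x j ∈ S i}, Wji S x i j

/-- `r_i := min_{j : x_j ∈ S_i} r(P^i_{-j})`. -/
noncomputable def rMin (S : Fin n → Submodule ℝ (EuclideanSpace ℝ (Fin D)))
    (x : Fin N → EuclideanSpace ℝ (Fin D)) (i : Fin n) : ℝ :=
  sInf {r : ℝ | ∃ j, x j ∈ S i ∧ r = inradius (symmHull (subXmin S x i j))}

/-- Cosine of the principal angle between two subspaces. -/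
noncomputable def cosAngle (Si Sk : Submodule ℝ (EuclideanSpace ℝ (Fin D))) : ℝ :=
  sSup {r : ℝ | ∃ u ∈ Si, ∃ v ∈ Sk, ‖u‖ = 1 ∧ ‖v‖ = 1 ∧ r = ⟪u, v⟫}


/-! ### Auxiliary lemmas -/

lemma ompState_residual_mem {ι : Type*} [Fintype ι] [LinearOrder ι]
    {V : Submodule ℝ (EuclideanSpace ℝ (Fin D))}
    {a : ι → EuclideanSpace ℝ (Fin D)} {b : EuclideanSpace ℝ (Fin D)}
    (ha : ∀ m, a m ∈ V) (hb : b ∈ V) (k : ℕ) :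
    (ompState a b k).2 ∈ V := by
  induction k with
  | zero => simpa [ompState] using hb
  | succ k ih =>
    rw [ompState]
    split_ifs with h0 h
    · exact ih
    · exact sub_mem hb (Submodule.span_le.mpr
        (by rintro p ⟨m, -, rfl⟩; exact ha m) (Submodule.coe_mem _))
    · exact ih

lemma span_symmHull (A : Set (EuclideanSpace ℝ (Fin D))) :
    Submodule.span ℝ (symmHull A) = Submodule.span ℝ A := by
  apply le_antisymm
  · rw [Submodule.span_le]
    apply convexHull_min
    · rintro p (hp | hp)
      · exact Submodule.subset_span hp
      · rw [Set.mem_neg] at hp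
        simpa using neg_mem (Submodule.subset_span hp)
    · exact (Submodule.span ℝ A).convex
  · exact Submodule.span_mono fun p hp => subset_convexHull ℝ _ (Or.inl hp)

lemma symmHull_neg_mem {A : Set (EuclideanSpace ℝ (Fin D))} {p : EuclideanSpace ℝ (Fin D)}
    (hp : p ∈ symmHull A) : -p ∈ symmHull A := by
  have h : -(A ∪ -A) = A ∪ -A := by ext q; simp [Set.mem_neg, or_comm]
  rw [symmHull, ← h, convexHull_neg]
  exact Set.neg_mem_neg.mpr hp

lemma inradius_nonneg (P : Set (EuclideanSpace ℝ (Fin D))) : 0 ≤ inradius P :=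
  Real.sSup_nonneg fun _ hr => hr.1

lemma cosAngle_le_one (Si Sk : Submodule ℝ (EuclideanSpace ℝ (Fin D))) :
    cosAngle Si Sk ≤ 1 := by
  apply Real.sSup_le _ zero_le_one
  rintro r ⟨u, hu, v, hv, hnu, hnv, rfl⟩
  calc ⟪u, v⟫ ≤ |⟪u, v⟫| := le_abs_self _
    _ ≤ ‖u‖ * ‖v‖ := abs_real_inner_le_norm u v
    _ = 1 := by rw [hnu, hnv]; ring

lemma abs_inner_le_cosAngle {Si Sk : Submodule ℝ (EuclideanSpace ℝ (Fin D))}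
    {u v : EuclideanSpace ℝ (Fin D)} (hu : u ∈ Si) (hv : v ∈ Sk)
    (hnu : ‖u‖ = 1) (hnv : ‖v‖ = 1) :
    |⟪u, v⟫| ≤ cosAngle Si Sk := by
  have hbdd : BddAbove {r : ℝ | ∃ u ∈ Si, ∃ v ∈ Sk, ‖u‖ = 1 ∧ ‖v‖ = 1 ∧ r = ⟪u, v⟫} := by
    refine ⟨1, ?_⟩
    rintro r ⟨a, ha, b, hb, hna, hnb, rfl⟩
    calc ⟪a, b⟫ ≤ |⟪a, b⟫| := le_abs_self _
      _ ≤ ‖a‖ * ‖b‖ := abs_real_inner_le_norm a b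
      _ = 1 := by rw [hna, hnb]; ring
  rcases abs_cases (⟪u, v⟫ : ℝ) with ⟨h, -⟩ | ⟨h, -⟩
  · rw [h]; exact le_csSup hbdd ⟨u, hu, v, hv, hnu, hnv, rfl⟩
  · rw [h]
    exact le_csSup hbdd ⟨-u, neg_mem hu, v, hv, by simpa using hnu, hnv,
      by rw [inner_neg_left]⟩

lemma abs_inner_le_norm_mul_cosAngle {Si Sk : Submodule ℝ (EuclideanSpace ℝ (Fin D))}
    {u v : EuclideanSpace ℝ (Fin D)} (hu : u ∈ Si) (hv : v ∈ Sk) (hnv : ‖v‖ = 1) :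
    |⟪u, v⟫| ≤ ‖u‖ * cosAngle Si Sk := by
  rcases eq_or_ne u 0 with rfl | h
  · simp
  · have hn : ‖u‖ ≠ 0 := norm_ne_zero_iff.mpr h
    have h1 : |⟪(‖u‖⁻¹ • u : EuclideanSpace ℝ (Fin D)), v⟫| ≤ cosAngle Si Sk :=
      abs_inner_le_cosAngle (Si.smul_mem _ hu) hv
        (by rw [norm_smul, norm_inv, norm_norm, inv_mul_cancel₀ hn]) hnv
    rw [real_inner_smul_left, abs_mul, abs_inv, abs_norm] at h1
    have h2 := mul_le_mul_of_nonneg_left h1 (norm_nonneg u)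
    rwa [← mul_assoc, mul_inv_cancel₀ hn, one_mul] at h2

lemma exists_large_inner {A : Set (EuclideanSpace ℝ (Fin D))} {w : EuclideanSpace ℝ (Fin D)}
    {r' : ℝ} (hr'0 : 0 < r') (hr' : r' < inradius (symmHull A))
    (hw : w ∈ Submodule.span ℝ A) (hnw : ‖w‖ = 1) :
    ∃ p ∈ A, r' ≤ |⟪p, w⟫| := by
  have hex : ∃ t ∈ {r : ℝ | 0 ≤ r ∧ ∃ c ∈ Submodule.span ℝ (symmHull A),
      ∀ y ∈ Submodule.span ℝ (symmHull A), ‖y - c‖ ≤ r → y ∈ symmHull A}, r' < t := by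
    by_contra hcon
    push_neg at hcon
    have hle : inradius (symmHull A) ≤ r' := Real.sSup_le hcon hr'0.le
    exact absurd hr' (not_lt.mpr hle)
  obtain ⟨t, ⟨ht0, c, hc, hball⟩, hrt⟩ := hex
  have hwspan : w ∈ Submodule.span ℝ (symmHull A) := by rw [span_symmHull]; exact hw
  have hnorm : ‖(r' : ℝ) • w‖ ≤ t := by
    rw [norm_smul, hnw, mul_one, Real.norm_eq_abs, abs_of_pos hr'0]; linarith
  have h1 : c + r' • w ∈ symmHull A := by
    apply hball _ (add_mem hc (Submodule.smul_mem _ _ hwspan))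
    rwa [add_sub_cancel_left]
  have h2 : c - r' • w ∈ symmHull A := by
    apply hball _ (sub_mem hc (Submodule.smul_mem _ _ hwspan))
    rwa [sub_sub_cancel_left, norm_neg]
  have h3 : r' • w ∈ symmHull A := by
    have hcx := (convex_convexHull ℝ (A ∪ -A)) h1 (symmHull_neg_mem h2)
      (by norm_num : (0:ℝ) ≤ 1/2) (by norm_num : (0:ℝ) ≤ 1/2) (by norm_num)
    have heq : (1/2 : ℝ) • (c + r' • w) + (1/2 : ℝ) • -(c - r' • w) = r' • w := by
      module
    rwa [heq] at hcx
  by_contra hcon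
  push_neg at hcon
  have hconv : Convex ℝ {p : EuclideanSpace ℝ (Fin D) | ⟪p, w⟫ < r'} :=
    convex_halfSpace_lt
      ⟨fun a b => inner_add_left a b w,
        fun c a => by simpa [smul_eq_mul] using real_inner_smul_left a w c⟩ r'
  have hsub : symmHull A ⊆ {p : EuclideanSpace ℝ (Fin D) | ⟪p, w⟫ < r'} := by
    apply convexHull_min _ hconv
    rintro p (hp | hp)
    · exact lt_of_le_of_lt (le_abs_self _) (hcon p hp)
    · rw [Set.mem_neg] at hp
      calc ⟪p, w⟫ ≤ |⟪p, w⟫| := le_abs_self _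
        _ = |⟪-p, w⟫| := by rw [inner_neg_left, abs_neg]
        _ < r' := hcon _ hp
  have hlt := hsub h3
  rw [Set.mem_setOf_eq, real_inner_smul_left, real_inner_self_eq_norm_sq, hnw] at hlt
  norm_num at hlt
set_option maxHeartbeats 1000000 in

/-- Fix `i` and suppose that for every `k ≠ i`,
`μ(X^i, X^k) < r_i − √(2 − 2 r_i) · cos θ*_{i,k}`. Then for every `k ≠ i`,
`μ(W^i, X^k) < r_i`; consequently `max_{k ≠ i} μ(W^i, X^k) < r_i`. -/
theorem dyerCondition_implies_coherenceInradiusCondition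
    {D n N : ℕ} (S : Fin n → Submodule ℝ (EuclideanSpace ℝ (Fin D)))
    (x : Fin N → EuclideanSpace ℝ (Fin D))
    (hunit : ∀ j, ‖x j‖ = 1)
    (hmem : ∀ j, ∃ i, x j ∈ S i)
    (hrank : ∀ i, ∀ j, x j ∈ S i → Submodule.span ℝ (subXmin S x i j) = S i)
    (i : Fin n)
    (hr0 : 0 < rMin S x i) (hr1 : rMin S x i ≤ 1)
    (hcond : ∀ k, k ≠ i → coherence (subX S x i) (subX S x k) <
      rMin S x i - Real.sqrt (2 - 2 * rMin S x i) * cosAngle (S i) (S k)) :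
    (∀ k, k ≠ i → coherence (Wfull S x i) (subX S x k) < rMin S x i) ∧
    sSup {r : ℝ | ∃ k, k ≠ i ∧ r = coherence (Wfull S x i) (subX S x k)} < rMin S x i := by
  have main : ∀ k, k ≠ i → coherence (Wfull S x i) (subX S x k) < rMin S x i := by
    intro k hk
    set ρ := rMin S x i with hρ
    set μ := coherence (subX S x i) (subX S x k) with hμdef
    set θ := cosAngle (S i) (S k) with hθdef
    have hθ1 : θ ≤ 1 := cosAngle_le_one _ _
    have hμ0 : 0 ≤ μ := Real.sSup_nonneg (by rintro r ⟨u, -, v, -, rfl⟩; exact abs_nonneg _)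
    have hμbdd : BddAbove {r : ℝ | ∃ u ∈ subX S x i, ∃ v ∈ subX S x k, r = |⟪u, v⟫|} := by
      refine ⟨1, ?_⟩
      rintro r ⟨u, ⟨a1, -, rfl⟩, v, ⟨a2, -, rfl⟩, rfl⟩
      calc |⟪x a1, x a2⟫| ≤ ‖x a1‖ * ‖x a2‖ := abs_real_inner_le_norm _ _
        _ = 1 := by rw [hunit, hunit]; ring
    set s2 := Real.sqrt (2 - 2 * ρ) with hs2
    have hs20 : 0 ≤ s2 := Real.sqrt_nonneg _
    set δ := min ρ (ρ - μ - s2 * θ) with hδdef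
    have hδ0 : 0 < δ := lt_min hr0 (by have := hcond k hk; linarith)
    have hδρ : δ ≤ ρ := min_le_left _ _
    have hδ2 : δ ≤ ρ - μ - s2 * θ := min_le_right _ _
    set η := min (ρ / 2) (δ ^ 2 / 8) with hηdef
    have hη0 : 0 < η := lt_min (by linarith) (by positivity)
    have hηρ : η ≤ ρ / 2 := min_le_left _ _
    have hηδ : η ≤ δ ^ 2 / 8 := min_le_right _ _
    set r' := ρ - η with hr'def
    have hr'0 : 0 < r' := by rw [hr'def]; linarith
    have hr'ρ : r' < ρ := by rw [hr'def]; linarith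
    -- the uniform bound on elements of the coherence set
    have hbound : ∀ r ∈ {r : ℝ | ∃ u ∈ Wfull S x i, ∃ v ∈ subX S x k, r = |⟪u, v⟫|},
        r ≤ ρ - δ / 2 := by
      rintro r ⟨u, hu, v, hv, rfl⟩
      simp only [Wfull, Set.mem_iUnion, Set.mem_setOf_eq] at hu
      obtain ⟨j, hj, hu⟩ := hu
      simp only [Wji, residualDirs, Set.mem_setOf_eq] at hu
      obtain ⟨κ, hq0, rfl⟩ := hu
      set q := ompResidual (fun m : {m : Fin N // x m ∈ S i ∧ m ≠ j} => x m.1) (x j) κ with hqdef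
      have hqmem : q ∈ S i := ompState_residual_mem (fun m => m.2.1) hj κ
      set u := ‖q‖⁻¹ • q with hudef
      have humem : u ∈ S i := Submodule.smul_mem _ _ hqmem
      have hnu : ‖u‖ = 1 := by
        rw [hudef, norm_smul, norm_inv, norm_norm, inv_mul_cancel₀ (norm_ne_zero_iff.mpr hq0)]
      obtain ⟨m, hm, rfl⟩ := hv
      have hnv : ‖x m‖ = 1 := hunit m
      -- inradius bound and extraction of a nearby dictionary point
      have hPj : ρ ≤ inradius (symmHull (subXmin S x i j)) := by
        rw [hρ, rMin]
        exact csInf_le ⟨0, by rintro t ⟨j', hj', rfl⟩; exact inradius_nonneg _⟩ ⟨j, hj, rfl⟩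
      have hwspan : u ∈ Submodule.span ℝ (subXmin S x i j) := by
        rw [hrank i j hj]; exact humem
      obtain ⟨p, hpA, hpI⟩ := exists_large_inner hr'0 (lt_of_lt_of_le hr'ρ hPj) hwspan hnu
      obtain ⟨m', hm', rfl⟩ := hpA
      -- choose the sign
      set y := if 0 ≤ ⟪x m', u⟫ then x m' else -(x m') with hydef
      have hyi : y ∈ S i := by
        rw [hydef]; split_ifs
        · exact hm'.1
        · exact neg_mem hm'.1
      have hny : ‖y‖ = 1 := by rw [hydef]; split_ifs <;> simp [hunit m']
      have hyu : r' ≤ ⟪y, u⟫ := by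
        rw [hydef]
        rcases le_or_gt 0 (⟪x m', u⟫ : ℝ) with h | h
        · rw [if_pos h]; rwa [abs_of_nonneg h] at hpI
        · rw [if_neg (not_le.mpr h), inner_neg_left]
          rwa [abs_of_neg h] at hpI
      have hyv : |⟪y, x m⟫| ≤ μ := by
        have hmm : |⟪x m', x m⟫| ≤ μ := by
          apply le_csSup hμbdd
          exact ⟨x m', ⟨m', hm'.1, rfl⟩, x m, ⟨m, hm, rfl⟩, rfl⟩
        rw [hydef]; split_ifs
        · exact hmm
        · rwa [inner_neg_left, abs_neg]
      -- cosine bounds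
      have hθ0 : 0 ≤ θ := by
        have := abs_inner_le_norm_mul_cosAngle humem hm hnv
        rw [hnu, one_mul] at this
        exact le_trans (abs_nonneg _) this
      have hdiff : |⟪u - y, x m⟫| ≤ ‖u - y‖ * θ :=
        abs_inner_le_norm_mul_cosAngle (sub_mem humem hyi) hm hnv
      -- norm of the difference
      have hnsq : ‖u - y‖ ^ 2 = 2 - 2 * ⟪u, y⟫ := by
        rw [norm_sub_sq_real, hnu, hny]; ring
      have hndiff : ‖u - y‖ ≤ Real.sqrt (2 - 2 * r') := by
        rw [← Real.sqrt_sq (norm_nonneg (u - y)), hnsq]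
        apply Real.sqrt_le_sqrt
        have : r' ≤ ⟪u, y⟫ := by rwa [real_inner_comm] at hyu
        linarith
      have hsqrt2 : Real.sqrt (2 - 2 * r') ≤ s2 + δ / 2 := by
        have h2r : 2 - 2 * r' ≤ (2 - 2 * ρ) + (δ / 2) ^ 2 := by
          rw [hr'def]; nlinarith
        have ha0 : (0:ℝ) ≤ 2 - 2 * ρ := by linarith
        have hb0 : (0:ℝ) ≤ (2 - 2 * ρ) + (δ / 2) ^ 2 := by positivity
        calc Real.sqrt (2 - 2 * r') ≤ Real.sqrt ((2 - 2 * ρ) + (δ / 2) ^ 2) :=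
              Real.sqrt_le_sqrt h2r
          _ ≤ s2 + δ / 2 := by
              have e1 := Real.sq_sqrt hb0
              have e2 := Real.sq_sqrt ha0
              have e3 := Real.sqrt_nonneg ((2 - 2 * ρ) + (δ / 2) ^ 2)
              rw [hs2]
              nlinarith [Real.sqrt_nonneg (2 - 2 * ρ)]
      -- the chain
      have hsplit : |⟪u, x m⟫| ≤ |⟪y, x m⟫| + |⟪u - y, x m⟫| := by
        have : (⟪u, x m⟫ : ℝ) = ⟪y, x m⟫ + ⟪u - y, x m⟫ := by
          rw [inner_sub_left]; ring
        rw [this]; exact abs_add_le _ _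
      have hmul : ‖u - y‖ * θ ≤ (s2 + δ / 2) * θ :=
        mul_le_mul_of_nonneg_right (le_trans hndiff hsqrt2) hθ0
      calc |⟪u, x m⟫| ≤ |⟪y, x m⟫| + |⟪u - y, x m⟫| := hsplit
        _ ≤ μ + ‖u - y‖ * θ := add_le_add hyv hdiff
        _ ≤ μ + (s2 + δ / 2) * θ := by linarith
        _ = μ + s2 * θ + (δ / 2) * θ := by ring
        _ ≤ μ + s2 * θ + δ / 2 := by nlinarith
        _ ≤ ρ - δ / 2 := by linarith
    have hcoh : coherence (Wfull S x i) (subX S x k) ≤ ρ - δ / 2 :=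
      Real.sSup_le hbound (by linarith)
    linarith
  refine ⟨main, ?_⟩
  have hfin : {r : ℝ | ∃ k, k ≠ i ∧ r = coherence (Wfull S x i) (subX S x k)}.Finite := by
    apply Set.Finite.subset (Set.finite_range
      (fun k : Fin n => coherence (Wfull S x i) (subX S x k)))
    rintro r ⟨k, -, rfl⟩
    exact ⟨k, rfl⟩
  rcases Set.eq_empty_or_nonempty
      {r : ℝ | ∃ k, k ≠ i ∧ r = coherence (Wfull S x i) (subX S x k)} with hT | hT
  · rw [hT, Real.sSup_empty]; exact hr0
  · obtain ⟨k, hk, heq⟩ := hT.csSup_mem hfin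
    rw [heq]
    exact main k hk

end SSCOMP
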